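/- The function T₊(s) = (1/4)[ξ₁(2s) + ξ₁(2s−1)] has a simple pole at s = 0 with residue −1/8, and lim_{s→0} (T₊(s) + 1/(8s)) = (3γ + π − 3 log(4π))/24, where γ is the Euler–Mascheroni constant. By the symmetry T₊(1−s) = T₊(s), it likewise has a simple pole at s = 1 with residue 1/8, i.e. lim_{s→1} (s−1) T₊(s) = 1/8. -/

import Mathlib

open Complex Filter Topology Real

/-- `T₊(s) = (1/4)[ξ₁(2s) + ξ₁(2s-1)]`, where `ξ₁ = completedRiemannZeta`. -/
noncomputable def Tplus (s : ℂ) : ℂ :=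
  (completedRiemannZeta (2 * s) + completedRiemannZeta (2 * s - 1)) / 4

/-- `T₋(s) = (1/4)[ξ₁(2s) - ξ₁(2s-1)]`, where `ξ₁ = completedRiemannZeta`. -/
noncomputable def Tminus (s : ℂ) : ℂ :=
  (completedRiemannZeta (2 * s) - completedRiemannZeta (2 * s - 1)) / 4

lemma Gammaℝ_two : Gammaℝ 2 = (π : ℂ)⁻¹ := by
  rw [Gammaℝ_def]
  norm_num [Complex.Gamma_one, cpow_neg_one]

lemma completedRiemannZeta_two : completedRiemannZeta 2 = (π : ℂ) / 6 := by
  have hπ : (π : ℂ) ≠ 0 := ofReal_ne_zero.mpr Real.pi_ne_zero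
  have h := riemannZeta_def_of_ne_zero (two_ne_zero (α := ℂ))
  rw [riemannZeta_two, Gammaℝ_two] at h
  field_simp at h
  refine mul_right_cancel₀ hπ ?_
  linear_combination -(π : ℂ) * h / 6

lemma completedRiemannZeta_neg_one : completedRiemannZeta (-1) = (π : ℂ) / 6 := by
  have := completedRiemannZeta_one_sub 2
  norm_num at this
  rw [this, completedRiemannZeta_two]

/-- The regular part of `T₊` near `0`. -/
noncomputable def Faux (s : ℂ) : ℂ :=
  (completedRiemannZeta₀ (2 * s) - 1 / (1 - 2 * s) + completedRiemannZeta (2 * s - 1)) / 4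

lemma Tplus_eq_Faux {s : ℂ} (hs : s ≠ 0) : Tplus s = Faux s - 1 / (8 * s) := by
  rw [Tplus, Faux, completedRiemannZeta_eq (2 * s)]
  field_simp
  ring

lemma Faux_zero : Faux 0 = (((3 * Real.eulerMascheroniConstant + Real.pi
    - 3 * Real.log (4 * Real.pi)) / 24 : ℝ) : ℂ) := by
  have h0 : completedRiemannZeta₀ 0
      = ((Real.eulerMascheroniConstant : ℂ) - Complex.log (4 * ↑π)) / 2 + 1 := by
    rw [show (0 : ℂ) = 1 - 1 by ring, completedRiemannZeta₀_one_sub, completedRiemannZeta₀_one]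
  have h1 : (2 * (0 : ℂ)) = 0 := by norm_num
  have h2 : (2 * (0 : ℂ) - 1) = -1 := by norm_num
  rw [Faux, h2, h1, h0, completedRiemannZeta_neg_one]
  push_cast [Complex.ofReal_log (by positivity : (0:ℝ) ≤ 4 * π)]
  ring

lemma Faux_continuousAt : ContinuousAt Faux 0 := by
  have h1 : ContinuousAt (fun s : ℂ => completedRiemannZeta₀ (2 * s)) 0 :=
    (differentiable_completedZeta₀.comp (differentiable_id.const_mul 2)).continuous.continuousAt
  have h2 : ContinuousAt (fun s : ℂ => 1 / (1 - 2 * s)) 0 := by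
    apply ContinuousAt.div continuousAt_const
    · fun_prop
    · norm_num
  have h3 : ContinuousAt (fun s : ℂ => completedRiemannZeta (2 * s - 1)) 0 := by
    have hd : DifferentiableAt ℂ completedRiemannZeta (2 * (0:ℂ) - 1) := by
      rw [show 2 * (0:ℂ) - 1 = -1 by norm_num]
      exact differentiableAt_completedZeta (by norm_num) (by norm_num)
    have := (hd.comp 0 (by fun_prop : DifferentiableAt ℂ (fun s : ℂ => 2 * s - 1) 0)).continuousAt
    exact this
  exact ((h1.sub h2).add h3).div_const 4

lemma Tplus_one_sub (s : ℂ) : Tplus (1 - s) = Tplus s := by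
  rw [Tplus, Tplus, show 2 * (1 - s) - 1 = 1 - 2 * s by ring,
    show 2 * (1 - s) = 1 - (2 * s - 1) by ring, completedRiemannZeta_one_sub,
    completedRiemannZeta_one_sub, add_comm]

theorem Tplus_poles :
    Tendsto (fun s : ℂ => s * Tplus s) (𝓝[≠] 0) (𝓝 (-(1 / 8))) ∧
    Tendsto (fun s : ℂ => Tplus s + 1 / (8 * s)) (𝓝[≠] 0)
      (𝓝 (((3 * Real.eulerMascheroniConstant + Real.pi
        - 3 * Real.log (4 * Real.pi)) / 24 : ℝ) : ℂ)) ∧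
    Tendsto (fun s : ℂ => (s - 1) * Tplus s) (𝓝[≠] 1) (𝓝 (1 / 8)) := by
  have hF : Tendsto Faux (𝓝[≠] (0 : ℂ)) (𝓝 (Faux 0)) :=
    Faux_continuousAt.continuousWithinAt.tendsto
  have h2 : Tendsto (fun s : ℂ => Tplus s + 1 / (8 * s)) (𝓝[≠] 0)
      (𝓝 (((3 * Real.eulerMascheroniConstant + Real.pi
        - 3 * Real.log (4 * Real.pi)) / 24 : ℝ) : ℂ)) := by
    rw [← Faux_zero]
    refine hF.congr' ?_
    filter_upwards [self_mem_nhdsWithin] with s hs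
    rw [Tplus_eq_Faux hs]; ring
  have h1 : Tendsto (fun s : ℂ => s * Tplus s) (𝓝[≠] 0) (𝓝 (-(1 / 8))) := by
    have hid : Tendsto (fun s : ℂ => s) (𝓝[≠] (0 : ℂ)) (𝓝 0) :=
      tendsto_id.mono_left nhdsWithin_le_nhds
    have := (hid.mul h2).sub tendsto_const_nhds (b := (1 / 8 : ℂ))
    rw [zero_mul, zero_sub] at this
    refine this.congr' ?_
    filter_upwards [self_mem_nhdsWithin] with s hs
    have h8 : (8 : ℂ) * s ≠ 0 := mul_ne_zero (by norm_num) hs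
    field_simp
    rw [mul_add, mul_one_div_cancel hs]; ring
  refine ⟨h1, h2, ?_⟩
  have hcont : Tendsto (fun s : ℂ => 1 - s) (𝓝 (1 : ℂ)) (𝓝 (0 : ℂ)) := by
    have : Continuous fun s : ℂ => 1 - s := by continuity
    simpa using this.tendsto 1
  have hmap : Tendsto (fun s : ℂ => 1 - s) (𝓝[≠] (1 : ℂ)) (𝓝[≠] (0 : ℂ)) := by
    refine tendsto_nhdsWithin_of_tendsto_nhds_of_eventually_within _
      (hcont.mono_left nhdsWithin_le_nhds) ?_
    filter_upwards [self_mem_nhdsWithin] with s hs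
    simp only [Set.mem_compl_iff, Set.mem_singleton_iff] at hs ⊢
    intro h
    exact hs (by linear_combination -h)
  have := (h1.comp hmap).neg
  rw [neg_neg] at this
  refine this.congr ?_
  intro s
  simp only [Function.comp_apply, Tplus_one_sub]
  ring
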